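/- Let f ∈ ℤ[X] be a polynomial of degree d ≥ 2. For every ε > 0 there exists a constant C = C(d, ε) > 0 such that for every nonzero integer w and every integer H ≥ 1, the number of pairs (n, m) of integers with 1 ≤ n, m ≤ H and f(n) − f(m) = w is at most C · |w|^ε. -/

import Mathlib

open Finset


lemma lin_le_pow {r : ℝ} (hr : 1 < r) : ∃ C : ℝ, 1 ≤ C ∧ ∀ a : ℕ, (a + 1 : ℝ) ≤ C * r ^ a := by
  have h1 : (0:ℝ) < r - 1 := by linarith
  refine ⟨max 1 (1/(r-1)), le_max_left _ _, fun a => ?_⟩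
  set C := max 1 (1/(r-1)) with hC
  have hC1 : 1 ≤ C := le_max_left _ _
  have hC2 : 1 ≤ C * (r-1) := by
    have := le_max_right 1 (1/(r-1))
    rw [div_le_iff₀ h1] at this
    linarith
  have h2 : 1 + (a:ℝ) * (r-1) ≤ r ^ a := by
    have := one_add_mul_le_pow (a := r - 1) (by linarith) a
    simpa using this
  have h3 : (a:ℝ) + 1 ≤ C * (1 + (a:ℝ) * (r-1)) := by
    have ha : (0:ℝ) ≤ a := Nat.cast_nonneg a
    nlinarith
  refine h3.trans ?_
  exact mul_le_mul_of_nonneg_left h2 (by linarith)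

lemma divisor_bound (ε : ℝ) (hε : 0 < ε) :
    ∃ C : ℝ, 0 < C ∧ ∀ n : ℕ, n ≠ 0 → ((n.divisors.card : ℝ)) ≤ C * (n : ℝ) ^ ε := by
  have hr : (1:ℝ) < (2:ℝ) ^ ε :=
    (Real.one_lt_rpow_iff (by norm_num)).mpr (Or.inl ⟨one_lt_two, hε⟩)
  obtain ⟨C1, hC1, hlin⟩ := lin_le_pow hr
  set B : ℝ := (2:ℝ) ^ (1/ε) with hB
  set K : ℕ := ⌈B⌉₊ + 1 with hK
  refine ⟨C1 ^ K, by positivity, fun n hn => ?_⟩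
  set P := n.primeFactors with hP
  set a : ℕ → ℕ := fun p => n.factorization p with ha
  have hprod : (n:ℝ) ^ ε = ∏ p ∈ P, ((p:ℝ) ^ ε) ^ (a p) := by
    conv_lhs => rw [← Nat.factorization_prod_pow_eq_self hn]
    rw [Finsupp.prod, Nat.support_factorization]
    push_cast
    rw [← Real.finset_prod_rpow _ _ (fun p _ => by positivity)]
    refine Finset.prod_congr rfl fun p hp => ?_
    rw [← Real.rpow_natCast (p:ℝ) (a p), ← Real.rpow_mul (by positivity),
      mul_comm, Real.rpow_mul (by positivity), Real.rpow_natCast]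
  have hcard : (n.divisors.card : ℝ) = ∏ p ∈ P, ((a p : ℝ) + 1) := by
    rw [Nat.card_divisors hn]
    push_cast
    rfl
  set c : ℕ → ℝ := fun p => if (p:ℝ) < B then C1 else 1 with hc
  have hfac : ∀ p ∈ P, ((a p : ℝ) + 1) ≤ c p * ((p:ℝ) ^ ε) ^ (a p) := by
    intro p hp
    have hpprime : p.Prime := Nat.prime_of_mem_primeFactors hp
    have hp2 : (2:ℝ) ≤ (p:ℝ) := by exact_mod_cast hpprime.two_le
    by_cases hsmall : (p:ℝ) < B
    · simp only [hc, if_pos hsmall]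
      refine (hlin (a p)).trans ?_
      refine mul_le_mul_of_nonneg_left ?_ (by linarith)
      exact pow_le_pow_left₀ (by positivity) (Real.rpow_le_rpow (by norm_num) hp2 hε.le) _
    · simp only [hc, if_neg hsmall, one_mul]
      push_neg at hsmall
      have h2le : (2:ℝ) ≤ (p:ℝ) ^ ε := by
        have := Real.rpow_le_rpow (by positivity) hsmall hε.le
        rwa [← Real.rpow_mul (by norm_num), one_div, inv_mul_cancel₀ hε.ne',
          Real.rpow_one] at this
      have h2a : ((a p : ℝ) + 1) ≤ (2:ℝ) ^ (a p) := by
        have := (a p).lt_two_pow_self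
        exact_mod_cast Nat.succ_le_of_lt this
      exact h2a.trans (pow_le_pow_left₀ (by norm_num) h2le _)
  have hmain : (n.divisors.card : ℝ) ≤ (∏ p ∈ P, c p) * ∏ p ∈ P, ((p:ℝ) ^ ε) ^ (a p) := by
    rw [hcard, ← Finset.prod_mul_distrib]
    exact Finset.prod_le_prod (fun p _ => by positivity) hfac
  refine hmain.trans ?_
  rw [hprod]
  refine mul_le_mul_of_nonneg_right ?_ (Finset.prod_nonneg fun p _ => by positivity)
  -- ∏ c p ≤ C1 ^ K
  have hcprod : (∏ p ∈ P, c p) = C1 ^ (P.filter (fun p : ℕ => (p:ℝ) < B)).card := by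
    rw [hc, Finset.prod_ite, Finset.prod_const, Finset.prod_const, one_pow, mul_one]
  rw [hcprod]
  have hsub : (P.filter (fun p : ℕ => (p:ℝ) < B)) ⊆ Finset.range K := by
    intro p hp
    rw [Finset.mem_filter] at hp
    rw [Finset.mem_range, hK]
    have : (p:ℝ) ≤ (⌈B⌉₊ : ℝ) := hp.2.le.trans (Nat.le_ceil B)
    have : p ≤ ⌈B⌉₊ := by exact_mod_cast this
    omega
  have : (P.filter (fun p : ℕ => (p:ℝ) < B)).card ≤ K := by
    simpa using Finset.card_le_card hsub
  exact pow_le_pow_right₀ hC1 this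

section
open Polynomial

lemma gk_ne_zero (f : Polynomial ℤ) (d : ℕ) (hd : 2 ≤ d) (hdeg : f.natDegree = d)
    (k w : ℤ) (hk : k ≠ 0) :
    f - f.comp (X - C k) - C w ≠ 0 := by
  intro h0
  have heval : ∀ x : ℤ, f.eval x = f.eval (x - k) + w := by
    intro x
    have h := congrArg (Polynomial.eval x) h0
    simp [Polynomial.eval_comp] at h
    linarith
  have hiter : ∀ j : ℕ, f.eval ((j : ℤ) * k) = f.eval 0 + (j : ℤ) * w := by
    intro j; induction j with
    | zero => simp
    | succ n ih =>
      have h := heval (((n : ℤ) + 1) * k)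
      push_cast
      rw [h, show ((n:ℤ)+1)*k - k = (n:ℤ)*k by ring, ih]; ring
  set P := f.comp (C k * X) - (C (f.eval 0) + C w * X) with hP
  have hPzero : P = 0 := by
    apply Polynomial.eq_zero_of_infinite_isRoot
    apply Set.infinite_of_injective_forall_mem (f := fun j : ℕ => (j : ℤ))
    · exact fun a b h => Nat.cast_injective h
    · intro j
      simp only [Set.mem_setOf_eq, hP, IsRoot, eval_sub, eval_add, eval_comp, eval_mul,
        eval_C, eval_X]
      rw [show k * (j:ℤ) = (j:ℤ) * k by ring, hiter j]; ring
  have h1 : f.comp (C k * X) = C (f.eval 0) + C w * X := by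
    have := sub_eq_zero.mp hPzero
    exact this
  have h2 : (f.comp (C k * X)).natDegree = d := by
    rw [Polynomial.natDegree_comp, hdeg]
    have : (C k * X : Polynomial ℤ).natDegree = 1 := by
      rw [Polynomial.natDegree_C_mul hk, Polynomial.natDegree_X]
    rw [this, mul_one]
  have h3 : (C (f.eval 0) + C w * X : Polynomial ℤ).natDegree ≤ 1 := by
    compute_degree
  rw [h1] at h2
  omega

end

theorem stmt_8 (f : Polynomial ℤ) (d : ℕ) (hd : 2 ≤ d) (hdeg : f.natDegree = d)
    (ε : ℝ) (hε : 0 < ε) :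
    ∃ C : ℝ, 0 < C ∧ ∀ w : ℤ, w ≠ 0 → ∀ H : ℤ, 1 ≤ H →
      ((((Finset.Icc 1 H) ×ˢ (Finset.Icc 1 H)).filter
          fun q : ℤ × ℤ => f.eval q.1 - f.eval q.2 = w).card : ℝ)
        ≤ C * |(w : ℝ)| ^ ε := by
  classical
  obtain ⟨C0, hC0, hdiv⟩ := divisor_bound ε hε
  refine ⟨C0 * (2 * d), by positivity, fun w hw H hH => ?_⟩
  set S := ((Finset.Icc 1 H ×ˢ Finset.Icc 1 H).filter
      fun q : ℤ × ℤ => f.eval q.1 - f.eval q.2 = w) with hS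
  set D : Finset ℤ := w.natAbs.divisors.image (fun k : ℕ => (k:ℤ)) ∪
      w.natAbs.divisors.image (fun k : ℕ => -(k:ℤ)) with hD
  have hwabs : w.natAbs ≠ 0 := Int.natAbs_ne_zero.mpr hw
  have hmem : ∀ q ∈ S, q.1 - q.2 ∈ D := by
    intro q hq
    rw [hS, Finset.mem_filter] at hq
    have hdvd : q.1 - q.2 ∣ w := hq.2 ▸ Polynomial.sub_dvd_eval_sub q.1 q.2 f
    have h1 : (q.1 - q.2).natAbs ∈ w.natAbs.divisors :=
      Nat.mem_divisors.mpr ⟨Int.natAbs_dvd_natAbs.mpr hdvd, hwabs⟩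
    rcases Int.natAbs_eq (q.1 - q.2) with h | h
    · exact Finset.mem_union_left _ (Finset.mem_image.mpr ⟨_, h1, h.symm⟩)
    · exact Finset.mem_union_right _ (Finset.mem_image.mpr ⟨_, h1, h.symm⟩)
  have hDne : (0:ℤ) ∉ D := by
    rw [hD]
    simp only [Finset.mem_union, Finset.mem_image, not_or, not_exists]
    constructor
    · rintro x ⟨hx, hx0⟩
      have : x = 0 := by exact_mod_cast hx0
      subst this; exact Nat.pos_of_mem_divisors hx |>.ne' rfl
    · rintro x ⟨hx, hx0⟩
      have : x = 0 := by omega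
      subst this; exact Nat.pos_of_mem_divisors hx |>.ne' rfl
  have hfiber : ∀ k ∈ D, (S.filter fun q : ℤ × ℤ => q.1 - q.2 = k).card ≤ d := by
    intro k hkD
    have hk : k ≠ 0 := fun h => hDne (h ▸ hkD)
    set g := f - f.comp (Polynomial.X - Polynomial.C k) - Polynomial.C w with hg
    have hgne := gk_ne_zero f d hd hdeg k w hk
    have hgdeg : g.natDegree ≤ d := by
      refine le_trans (Polynomial.natDegree_sub_le _ _) ?_
      have hcomp : (f.comp (Polynomial.X - Polynomial.C k)).natDegree = d := by
        rw [Polynomial.natDegree_comp, Polynomial.natDegree_X_sub_C, hdeg, mul_one]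
      refine max_le (le_trans (Polynomial.natDegree_sub_le _ _) ?_) ?_
      · rw [hcomp, hdeg]; simp
      · rw [Polynomial.natDegree_C]; omega
    have hinj : Set.InjOn Prod.fst (((S.filter fun q : ℤ × ℤ => q.1 - q.2 = k) : Finset (ℤ × ℤ)) : Set (ℤ × ℤ)) := by
      intro a ha b hb hab
      rw [Finset.mem_coe, Finset.mem_filter] at ha hb
      have : a.2 = b.2 := by omega
      exact Prod.ext hab this
    calc (S.filter fun q : ℤ × ℤ => q.1 - q.2 = k).card
        = ((S.filter fun q : ℤ × ℤ => q.1 - q.2 = k).image Prod.fst).card :=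
          (Finset.card_image_of_injOn hinj).symm
      _ ≤ g.roots.toFinset.card := by
          apply Finset.card_le_card
          intro n hn
          rw [Finset.mem_image] at hn
          obtain ⟨q, hq, rfl⟩ := hn
          rw [Finset.mem_filter] at hq
          obtain ⟨hqS, hqk⟩ := hq
          rw [hS, Finset.mem_filter] at hqS
          rw [Multiset.mem_toFinset, Polynomial.mem_roots']
          refine ⟨hgne, ?_⟩
          have hq2 : q.2 = q.1 - k := by omega
          simp only [hg, Polynomial.IsRoot, Polynomial.eval_sub, Polynomial.eval_comp,
            Polynomial.eval_X, Polynomial.eval_C]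
          rw [← hq2]
          linarith [hqS.2]
      _ ≤ Multiset.card g.roots := Multiset.toFinset_card_le _
      _ ≤ g.natDegree := Polynomial.card_roots' g
      _ ≤ d := hgdeg
  have hcard : S.card ≤ D.card * d := by
    rw [Finset.card_eq_sum_card_fiberwise hmem]
    calc ∑ k ∈ D, (S.filter fun q : ℤ × ℤ => q.1 - q.2 = k).card
        ≤ ∑ k ∈ D, d := Finset.sum_le_sum hfiber
      _ = D.card * d := by rw [Finset.sum_const, smul_eq_mul]
  have hDcard : D.card ≤ 2 * w.natAbs.divisors.card := by
    refine le_trans (Finset.card_union_le _ _) ?_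
    have h1 := Finset.card_image_le (s := w.natAbs.divisors) (f := fun k : ℕ => (k:ℤ))
    have h2 := Finset.card_image_le (s := w.natAbs.divisors) (f := fun k : ℕ => -(k:ℤ))
    omega
  have hτ := hdiv w.natAbs hwabs
  have habs : |(w:ℝ)| = (w.natAbs : ℝ) := by
    rw [Nat.cast_natAbs, Int.cast_abs]
  rw [habs]
  have h1 : (S.card : ℝ) ≤ 2 * w.natAbs.divisors.card * d := by
    calc (S.card : ℝ) ≤ (D.card * d : ℕ) := by exact_mod_cast hcard
      _ ≤ ((2 * w.natAbs.divisors.card) * d : ℕ) := by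
          exact_mod_cast Nat.mul_le_mul_right d hDcard
      _ = 2 * w.natAbs.divisors.card * d := by push_cast; ring
  refine h1.trans ?_
  have hd0 : (0:ℝ) ≤ d := Nat.cast_nonneg d
  calc (2:ℝ) * w.natAbs.divisors.card * d ≤ 2 * (C0 * (w.natAbs:ℝ) ^ ε) * d := by
        have := mul_le_mul_of_nonneg_right (mul_le_mul_of_nonneg_left hτ (by norm_num : (0:ℝ) ≤ 2)) hd0
        linarith
    _ = C0 * (2 * d) * (w.natAbs:ℝ) ^ ε := by ring
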